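/- For θ ∈ (0,π) and all x ∈ ℝ, f_θ(x) + f_θ(-x) = π - θ. -/

import Mathlib

open Real Filter

/-- For `θ ∈ (0,π)`, the function `f_θ` (characterized by its derivative
`f_θ'(x) = sin θ/(2(cosh x − cos θ))` together with `lim_{x→−∞} f_θ(x) = 0` and
`lim_{x→+∞} f_θ(x) = π − θ`) satisfies `f_θ(x) + f_θ(−x) = π − θ` for all `x`. -/
theorem circle_pattern_f_functional_equation
    (θ : ℝ) (hθ : θ ∈ Set.Ioo 0 Real.pi) (f : ℝ → ℝ)
    (hderiv : ∀ x : ℝ, HasDerivAt f (Real.sin θ / (2 * (Real.cosh x - Real.cos θ))) x)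
    (hbot : Tendsto f atBot (nhds 0))
    (htop : Tendsto f atTop (nhds (Real.pi - θ))) :
    ∀ x : ℝ, f x + f (-x) = Real.pi - θ := by
  set g : ℝ → ℝ := fun x => f x + f (-x) with hg
  have hgd : ∀ x : ℝ, HasDerivAt g 0 x := by
    intro x
    have h1 := hderiv x
    have h2 : HasDerivAt (fun x : ℝ => f (-x))
        (-(Real.sin θ / (2 * (Real.cosh x - Real.cos θ)))) x := by
      have := (hderiv (-x)).comp x (hasDerivAt_neg x)
      simpa [Real.cosh_neg, Function.comp_def] using this
    simpa [hg, Pi.add_def] using h1.add h2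
  have hconst : ∀ x y : ℝ, g x = g y :=
    is_const_of_deriv_eq_zero (fun x => (hgd x).differentiableAt)
      (fun x => (hgd x).deriv)
  have hlim : Tendsto g atTop (nhds (Real.pi - θ + 0)) :=
    htop.add (hbot.comp tendsto_neg_atTop_atBot)
  intro x
  have h0 : Tendsto g atTop (nhds (g x)) := by
    have : g = fun _ => g x := funext fun y => hconst y x
    rw [this]; exact tendsto_const_nhds
  have := tendsto_nhds_unique h0 hlim
  simpa using this
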